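/- (Henson) For two n-tuples ā, b̄ generating finite dimensional real Banach spaces, the infimum over all Banach spaces C and isometric linear embeddings f : ⟨ā⟩ → C, g : ⟨b̄⟩ → C of max_i ‖f a_i − g b_i‖ equals sup over (s_i) with Σ|s_i| = 1 of | ‖Σ s_i a_i‖ − ‖Σ s_i b_i‖ |. -/

import Mathlib

open scoped BigOperators

namespace HensonAux

/-- Type synonym for `A × B` carrying the amalgam seminorm. -/
def Am (A B : Type) : Type := A × B

instance {A B : Type} [AddCommGroup A] [AddCommGroup B] : AddCommGroup (Am A B) :=
  inferInstanceAs (AddCommGroup (A × B))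

instance {A B : Type} [AddCommGroup A] [AddCommGroup B] [Module ℝ A] [Module ℝ B] :
    Module ℝ (Am A B) :=
  inferInstanceAs (Module ℝ (A × B))

variable {A B : Type} [NormedAddCommGroup A] [NormedSpace ℝ A]
  [NormedAddCommGroup B] [NormedSpace ℝ B]
variable {n : ℕ}

variable {A B : Type} [NormedAddCommGroup A] [NormedSpace ℝ A]
  [NormedAddCommGroup B] [NormedSpace ℝ B]

variable {n : ℕ}

/-- The cost function defining the amalgam seminorm. -/
noncomputable def F (r : ℝ) (a : Fin n → A) (b : Fin n → B) (p : A × B) (t : Fin n → ℝ) : ℝ :=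
  ‖p.1 + ∑ i, t i • a i‖ + ‖p.2 - ∑ i, t i • b i‖ + r * ∑ i, |t i|

/-- The amalgam seminorm. -/
noncomputable def N (r : ℝ) (a : Fin n → A) (b : Fin n → B) (p : A × B) : ℝ :=
  ⨅ t : Fin n → ℝ, F r a b p t

theorem F_nonneg {r : ℝ} (hr0 : 0 ≤ r) (a : Fin n → A) (b : Fin n → B) (p : A × B)
    (t : Fin n → ℝ) : 0 ≤ F r a b p t :=
  add_nonneg (add_nonneg (norm_nonneg _) (norm_nonneg _))
    (mul_nonneg hr0 (Finset.sum_nonneg fun i _ => abs_nonneg _))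

theorem F_bdd {r : ℝ} (hr0 : 0 ≤ r) (a : Fin n → A) (b : Fin n → B) (p : A × B) :
    BddBelow (Set.range (F r a b p)) := by
  refine ⟨0, ?_⟩
  rintro x ⟨t, rfl⟩
  exact F_nonneg hr0 a b p t

theorem N_le_F {r : ℝ} (hr0 : 0 ≤ r) (a : Fin n → A) (b : Fin n → B) (p : A × B)
    (t : Fin n → ℝ) : N r a b p ≤ F r a b p t :=
  ciInf_le (F_bdd hr0 a b p) t

theorem N_nonneg {r : ℝ} (hr0 : 0 ≤ r) (a : Fin n → A) (b : Fin n → B) (p : A × B) :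
    0 ≤ N r a b p :=
  le_ciInf fun t => F_nonneg hr0 a b p t

theorem N_add {r : ℝ} (hr0 : 0 ≤ r) (a : Fin n → A) (b : Fin n → B) (p q : A × B) :
    N r a b (p + q) ≤ N r a b p + N r a b q := by
  refine le_of_forall_pos_le_add fun ε hε => ?_
  obtain ⟨t, ht⟩ : ∃ t, F r a b p t < N r a b p + ε / 2 :=
    exists_lt_of_ciInf_lt (lt_add_of_pos_right _ (half_pos hε))
  obtain ⟨u, hu⟩ : ∃ u, F r a b q u < N r a b q + ε / 2 :=
    exists_lt_of_ciInf_lt (lt_add_of_pos_right _ (half_pos hε))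
  have key : F r a b (p + q) (t + u) ≤ F r a b p t + F r a b q u := by
    have h1 : (p + q).1 + ∑ i, (t + u) i • a i =
        (p.1 + ∑ i, t i • a i) + (q.1 + ∑ i, u i • a i) := by
      simp only [Prod.fst_add, Pi.add_apply, add_smul, Finset.sum_add_distrib]
      abel
    have h2 : (p + q).2 - ∑ i, (t + u) i • b i =
        (p.2 - ∑ i, t i • b i) + (q.2 - ∑ i, u i • b i) := by
      simp only [Prod.snd_add, Pi.add_apply, add_smul, Finset.sum_add_distrib]
      abel
    have h3 : r * ∑ i, |(t + u) i| ≤ r * ∑ i, |t i| + r * ∑ i, |u i| := by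
      rw [← mul_add, ← Finset.sum_add_distrib]
      exact mul_le_mul_of_nonneg_left (Finset.sum_le_sum fun i _ => abs_add_le _ _) hr0
    calc F r a b (p + q) (t + u)
        = ‖(p.1 + ∑ i, t i • a i) + (q.1 + ∑ i, u i • a i)‖ +
          ‖(p.2 - ∑ i, t i • b i) + (q.2 - ∑ i, u i • b i)‖ + r * ∑ i, |(t + u) i| := by
          rw [F, h1, h2]
      _ ≤ _ := by
          refine add_le_add (add_le_add (norm_add_le _ _) (norm_add_le _ _)) h3 |>.trans ?_
          simp only [F]; ring_nf; exact le_refl _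
  have := (N_le_F hr0 a b (p + q) (t + u)).trans key
  linarith

theorem F_neg (r : ℝ) (a : Fin n → A) (b : Fin n → B) (p : A × B) (t : Fin n → ℝ) :
    F r a b (-p) (-t) = F r a b p t := by
  have h1 : (-p).1 + ∑ i, (-t) i • a i = -(p.1 + ∑ i, t i • a i) := by
    simp only [Prod.fst_neg, Pi.neg_apply, neg_smul, Finset.sum_neg_distrib]
    abel
  have h2 : (-p).2 - ∑ i, (-t) i • b i = -(p.2 - ∑ i, t i • b i) := by
    simp only [Prod.snd_neg, Pi.neg_apply, neg_smul, Finset.sum_neg_distrib]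
    abel
  rw [F, F, h1, h2, norm_neg, norm_neg]
  simp [abs_neg]

theorem N_neg {r : ℝ} (hr0 : 0 ≤ r) (a : Fin n → A) (b : Fin n → B) (p : A × B) :
    N r a b (-p) = N r a b p := by
  have key : ∀ q : A × B, N r a b (-q) ≤ N r a b q := fun q =>
    le_ciInf fun t => (N_le_F hr0 a b (-q) (-t)).trans (F_neg r a b q t).le
  refine le_antisymm (key p) ?_
  have := key (-p)
  rwa [neg_neg] at this

theorem N_smul {r : ℝ} (hr0 : 0 ≤ r) (a : Fin n → A) (b : Fin n → B) (c : ℝ) (p : A × B) :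
    N r a b (c • p) ≤ |c| * N r a b p := by
  rcases eq_or_ne c 0 with rfl | hc
  · simp only [zero_smul, abs_zero, zero_mul]
    refine (N_le_F hr0 a b 0 0).trans ?_
    simp [F]
  · have hcpos : (0:ℝ) < |c| := abs_pos.mpr hc
    have hF : ∀ t : Fin n → ℝ, F r a b (c • p) (c • t) = |c| * F r a b p t := by
      intro t
      have h1 : (c • p).1 + ∑ i, (c • t) i • a i = c • (p.1 + ∑ i, t i • a i) := by
        simp only [Prod.smul_fst, Pi.smul_apply, smul_eq_mul, mul_smul, smul_add,
          Finset.smul_sum]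
      have h2 : (c • p).2 - ∑ i, (c • t) i • b i = c • (p.2 - ∑ i, t i • b i) := by
        simp only [Prod.smul_snd, Pi.smul_apply, smul_eq_mul, mul_smul, smul_sub,
          Finset.smul_sum]
      rw [F, F, h1, h2, norm_smul, norm_smul, Real.norm_eq_abs]
      have h3 : ∑ i, |(c • t) i| = |c| * ∑ i, |t i| := by
        simp only [Pi.smul_apply, smul_eq_mul, abs_mul, ← Finset.mul_sum]
      rw [h3]; ring
    have hdiv : N r a b (c • p) / |c| ≤ N r a b p := by
      refine le_ciInf fun t => ?_
      rw [div_le_iff₀ hcpos]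
      calc N r a b (c • p) ≤ F r a b (c • p) (c • t) := N_le_F hr0 a b _ _
        _ = |c| * F r a b p t := hF t
        _ = F r a b p t * |c| := mul_comm _ _
    have := (div_le_iff₀ hcpos).mp hdiv
    linarith [this, mul_comm (N r a b p) |c|]

theorem N_fst {r : ℝ} (hr0 : 0 ≤ r) (a : Fin n → A) (b : Fin n → B)
    (hr : ∀ t : Fin n → ℝ, |‖∑ i, t i • a i‖ - ‖∑ i, t i • b i‖| ≤ r * ∑ i, |t i|)
    (x : A) : N r a b (x, 0) = ‖x‖ := by
  refine le_antisymm ((N_le_F hr0 a b _ 0).trans (by simp [F])) (le_ciInf fun t => ?_)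
  have h1 : ‖∑ i, t i • a i‖ - ‖∑ i, t i • b i‖ ≤ r * ∑ i, |t i| :=
    (le_abs_self _).trans (hr t)
  have h2 : ‖x‖ ≤ ‖x + ∑ i, t i • a i‖ + ‖∑ i, t i • a i‖ := by
    simpa using norm_add_le (x + ∑ i, t i • a i) (-(∑ i, t i • a i))
  have h3 : F r a b (x, 0) t
      = ‖x + ∑ i, t i • a i‖ + ‖∑ i, t i • b i‖ + r * ∑ i, |t i| := by
    simp [F]
  rw [h3]; linarith

theorem N_snd {r : ℝ} (hr0 : 0 ≤ r) (a : Fin n → A) (b : Fin n → B)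
    (hr : ∀ t : Fin n → ℝ, |‖∑ i, t i • a i‖ - ‖∑ i, t i • b i‖| ≤ r * ∑ i, |t i|)
    (y : B) : N r a b (0, y) = ‖y‖ := by
  refine le_antisymm ((N_le_F hr0 a b _ 0).trans (by simp [F])) (le_ciInf fun t => ?_)
  have h1 : ‖∑ i, t i • b i‖ - ‖∑ i, t i • a i‖ ≤ r * ∑ i, |t i| := by
    have h := hr t
    rw [abs_sub_le_iff] at h
    exact h.2
  have h2 : ‖y‖ ≤ ‖y - ∑ i, t i • b i‖ + ‖∑ i, t i • b i‖ := by
    simpa using norm_add_le (y - ∑ i, t i • b i) (∑ i, t i • b i)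
  have h3 : F r a b (0, y) t
      = ‖∑ i, t i • a i‖ + ‖y - ∑ i, t i • b i‖ + r * ∑ i, |t i| := by
    simp [F]
  rw [h3]; linarith

theorem N_pair {r : ℝ} (hr0 : 0 ≤ r) (a : Fin n → A) (b : Fin n → B) (i : Fin n) :
    N r a b (a i, -(b i)) ≤ r := by
  set t0 : Fin n → ℝ := -(Pi.single i 1) with ht0
  have h1 : ∑ j, t0 j • a j = -(a i) := by
    simp [ht0, Pi.single_apply, ite_smul, Finset.sum_ite_eq']
  have h2 : ∑ j, t0 j • b j = -(b i) := by
    simp [ht0, Pi.single_apply, ite_smul, Finset.sum_ite_eq']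
  have h3 : ∑ j, |t0 j| = 1 := by
    simp [ht0, Pi.single_apply, apply_ite abs, Finset.sum_ite_eq']
  refine (N_le_F hr0 a b _ t0).trans ?_
  rw [F, h1, h2, h3]
  simp


/-- Identity map into the synonym. -/
def toAm {A B : Type} (p : A × B) : Am A B := p

theorem toAm_add {A B : Type} [AddCommGroup A] [AddCommGroup B] (p q : A × B) :
    toAm (p + q) = toAm p + toAm q := rfl

theorem toAm_sub {A B : Type} [AddCommGroup A] [AddCommGroup B] (p q : A × B) :
    toAm (p - q) = toAm p - toAm q := rfl

theorem toAm_smul {A B : Type} [AddCommGroup A] [AddCommGroup B] [Module ℝ A] [Module ℝ B]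
    (c : ℝ) (p : A × B) : toAm (c • p) = c • toAm p := rfl

/-- The amalgam seminorm as a bundled `AddGroupSeminorm` on `Am A B`. -/
noncomputable def sn {r : ℝ} (hr0 : 0 ≤ r) (a : Fin n → A) (b : Fin n → B) :
    AddGroupSeminorm (Am A B) where
  toFun p := N r a b p
  map_zero' := le_antisymm ((N_le_F hr0 a b 0 0).trans_eq (by simp [F]))
    (N_nonneg hr0 a b 0)
  add_le' := N_add hr0 a b
  neg' := N_neg hr0 a b

theorem exists_embedding {r : ℝ} (hr0 : 0 ≤ r) (a : Fin n → A) (b : Fin n → B)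
    (hr : ∀ t : Fin n → ℝ, |‖∑ i, t i • a i‖ - ‖∑ i, t i • b i‖| ≤ r * ∑ i, |t i|)
    (hA : Module.Finite ℝ A) (hB : Module.Finite ℝ B) :
    ∃ (C : Type) (_ : NormedAddCommGroup C) (_ : NormedSpace ℝ C) (_ : CompleteSpace C)
      (f : A →ₗᵢ[ℝ] C) (g : B →ₗᵢ[ℝ] C),
      ∀ i, ‖f (a i) - g (b i)‖ ≤ r := by
  letI : SeminormedAddCommGroup (Am A B) := (sn hr0 a b).toSeminormedAddCommGroup
  have hnorm : ∀ p : A × B, ‖toAm p‖ = N r a b p := fun p => rfl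
  letI : NormedSpace ℝ (Am A B) :=
    { norm_smul_le := fun c p => by
        change ‖toAm (c • (p : A × B))‖ ≤ ‖c‖ * ‖toAm (p : A × B)‖
        rw [Real.norm_eq_abs]
        exact N_smul hr0 a b c p }
  letI C := SeparationQuotient (Am A B)
  haveI : Module.Finite ℝ (Am A B) := by
    haveI := hA; haveI := hB
    exact inferInstanceAs (Module.Finite ℝ (A × B))
  haveI : Module.Finite ℝ C :=
    Module.Finite.of_surjective (SeparationQuotient.mkCLM ℝ (Am A B)).toLinearMap
      SeparationQuotient.surjective_mk
  haveI : CompleteSpace C := FiniteDimensional.complete ℝ C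
  let f : A →ₗᵢ[ℝ] C :=
    { toFun := fun x => SeparationQuotient.mk (toAm ((x, 0) : A × B))
      map_add' := fun x y => by
        show SeparationQuotient.mk (toAm ((x + y, 0) : A × B)) = _
        rw [show ((x + y, 0) : A × B) = (x, 0) + (y, 0) by simp, toAm_add,
          SeparationQuotient.mk_add]
      map_smul' := fun c x => by
        show SeparationQuotient.mk (toAm ((c • x, 0) : A × B)) = _
        rw [show ((c • x, 0) : A × B) = c • (x, 0) by simp, toAm_smul,
          SeparationQuotient.mk_smul]
        rfl
      norm_map' := fun x => by
        show ‖SeparationQuotient.mk (toAm ((x, 0) : A × B))‖ = ‖x‖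
        rw [SeparationQuotient.norm_mk, hnorm]
        exact N_fst hr0 a b hr x }
  let g : B →ₗᵢ[ℝ] C :=
    { toFun := fun y => SeparationQuotient.mk (toAm ((0, y) : A × B))
      map_add' := fun x y => by
        show SeparationQuotient.mk (toAm ((0, x + y) : A × B)) = _
        rw [show ((0, x + y) : A × B) = (0, x) + (0, y) by simp, toAm_add,
          SeparationQuotient.mk_add]
      map_smul' := fun c y => by
        show SeparationQuotient.mk (toAm ((0, c • y) : A × B)) = _
        rw [show ((0, c • y) : A × B) = c • (0, y) by simp, toAm_smul,
          SeparationQuotient.mk_smul]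
        rfl
      norm_map' := fun y => by
        show ‖SeparationQuotient.mk (toAm ((0, y) : A × B))‖ = ‖y‖
        rw [SeparationQuotient.norm_mk, hnorm]
        exact N_snd hr0 a b hr y }
  refine ⟨C, inferInstance, inferInstance, inferInstance, f, g, fun i => ?_⟩
  have key : f (a i) - g (b i) = SeparationQuotient.mk (toAm ((a i, -(b i)) : A × B)) := by
    show SeparationQuotient.mk (toAm ((a i, 0) : A × B)) -
      SeparationQuotient.mk (toAm ((0, b i) : A × B)) = _
    rw [← SeparationQuotient.mk_sub, ← toAm_sub,
      show ((a i, 0) : A × B) - (0, b i) = (a i, -(b i)) by simp]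
  rw [key, SeparationQuotient.norm_mk, hnorm]
  exact N_pair hr0 a b i


end HensonAux

/-- (Henson) For `n`-tuples `ā`, `b̄` spanning finite dimensional real Banach
spaces, the infimum over all Banach spaces `C` and isometric linear embeddings
`f : ⟨ā⟩ → C`, `g : ⟨b̄⟩ → C` of `max_i ‖f aᵢ − g bᵢ‖` equals
`sup_{Σ|sᵢ|=1} | ‖Σ sᵢ aᵢ‖ − ‖Σ sᵢ bᵢ‖ |`. -/
theorem henson_distance_formula {A B : Type} [NormedAddCommGroup A]
    [NormedSpace ℝ A] [NormedAddCommGroup B] [NormedSpace ℝ B]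
    [CompleteSpace A] [CompleteSpace B]
    (n : ℕ) (hn : 0 < n) (a : Fin n → A) (b : Fin n → B)
    (ha : Submodule.span ℝ (Set.range a) = ⊤)
    (hb : Submodule.span ℝ (Set.range b) = ⊤) :
    sInf { r : ℝ | ∃ (C : Type) (_ : NormedAddCommGroup C)
        (_ : NormedSpace ℝ C) (_ : CompleteSpace C)
        (f : A →ₗᵢ[ℝ] C) (g : B →ₗᵢ[ℝ] C),
        r = ⨆ i, ‖f (a i) - g (b i)‖ } =
      ⨆ s : {s : Fin n → ℝ // ∑ i, |s i| = 1},
        |‖∑ i, s.1 i • a i‖ - ‖∑ i, s.1 i • b i‖| := by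
  classical
  haveI : Nonempty (Fin n) := ⟨⟨0, hn⟩⟩
  set R := ⨆ s : {s : Fin n → ℝ // ∑ i, |s i| = 1},
    |‖∑ i, s.1 i • a i‖ - ‖∑ i, s.1 i • b i‖| with hRdef
  set S := { r : ℝ | ∃ (C : Type) (_ : NormedAddCommGroup C)
      (_ : NormedSpace ℝ C) (_ : CompleteSpace C)
      (f : A →ₗᵢ[ℝ] C) (g : B →ₗᵢ[ℝ] C),
      r = ⨆ i, ‖f (a i) - g (b i)‖ } with hSdef
  have i0 : Fin n := ⟨0, hn⟩
  have hs0 : ∑ i, |Pi.single i0 (1:ℝ) i| = 1 := by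
    simp [Pi.single_apply, apply_ite abs, Finset.sum_ite_eq']
  haveI hne : Nonempty {s : Fin n → ℝ // ∑ i, |s i| = 1} := ⟨⟨_, hs0⟩⟩
  have hbdd : BddAbove (Set.range fun s : {s : Fin n → ℝ // ∑ i, |s i| = 1} =>
      |‖∑ i, s.1 i • a i‖ - ‖∑ i, s.1 i • b i‖|) := by
    refine ⟨∑ i, (‖a i‖ + ‖b i‖), ?_⟩
    rintro x ⟨s, rfl⟩
    have h1 : ∀ i, |s.1 i| ≤ 1 := fun i => by
      calc |s.1 i| ≤ ∑ j, |s.1 j| :=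
            Finset.single_le_sum (f := fun j => |s.1 j|) (fun j _ => abs_nonneg _)
              (Finset.mem_univ i)
        _ = 1 := s.2
    have hA : ‖∑ i, s.1 i • a i‖ ≤ ∑ i, ‖a i‖ := by
      refine (norm_sum_le _ _).trans (Finset.sum_le_sum fun i _ => ?_)
      rw [norm_smul, Real.norm_eq_abs]
      exact mul_le_of_le_one_left (norm_nonneg _) (h1 i)
    have hB : ‖∑ i, s.1 i • b i‖ ≤ ∑ i, ‖b i‖ := by
      refine (norm_sum_le _ _).trans (Finset.sum_le_sum fun i _ => ?_)
      rw [norm_smul, Real.norm_eq_abs]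
      exact mul_le_of_le_one_left (norm_nonneg _) (h1 i)
    calc |‖∑ i, s.1 i • a i‖ - ‖∑ i, s.1 i • b i‖|
        ≤ |‖∑ i, s.1 i • a i‖| + |‖∑ i, s.1 i • b i‖| := abs_sub _ _
      _ = ‖∑ i, s.1 i • a i‖ + ‖∑ i, s.1 i • b i‖ := by rw [abs_norm, abs_norm]
      _ ≤ ∑ i, ‖a i‖ + ∑ i, ‖b i‖ := add_le_add hA hB
      _ = ∑ i, (‖a i‖ + ‖b i‖) := (Finset.sum_add_distrib).symm
  have hR0 : 0 ≤ R := le_ciSup_of_le hbdd ⟨_, hs0⟩ (abs_nonneg _)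
  have hr : ∀ t : Fin n → ℝ,
      |‖∑ i, t i • a i‖ - ‖∑ i, t i • b i‖| ≤ R * ∑ i, |t i| := by
    intro t
    set T := ∑ i, |t i| with hT
    have hT0 : 0 ≤ T := Finset.sum_nonneg fun i _ => abs_nonneg _
    rcases hT0.lt_or_eq with hTpos | hT0'
    · have hs : ∑ i, |t i / T| = 1 := by
        simp only [abs_div, abs_of_pos hTpos]
        rw [← Finset.sum_div, ← hT, div_self hTpos.ne']
      have hle : |‖∑ i, (t i / T) • a i‖ - ‖∑ i, (t i / T) • b i‖| ≤ R :=
        le_ciSup hbdd (⟨fun i => t i / T, hs⟩ : {s : Fin n → ℝ // ∑ i, |s i| = 1})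
      have e1 : ∑ i, (t i / T) • a i = T⁻¹ • ∑ i, t i • a i := by
        rw [Finset.smul_sum]
        exact Finset.sum_congr rfl fun i _ => by rw [div_eq_inv_mul, mul_smul]
      have e2 : ∑ i, (t i / T) • b i = T⁻¹ • ∑ i, t i • b i := by
        rw [Finset.smul_sum]
        exact Finset.sum_congr rfl fun i _ => by rw [div_eq_inv_mul, mul_smul]
      rw [e1, e2, norm_smul, norm_smul, Real.norm_eq_abs,
        abs_of_pos (inv_pos.mpr hTpos), ← mul_sub, abs_mul,
        abs_of_pos (inv_pos.mpr hTpos), inv_mul_le_iff₀ hTpos] at hle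
      calc |‖∑ i, t i • a i‖ - ‖∑ i, t i • b i‖| ≤ T * R := hle
        _ = R * T := mul_comm _ _
    · have : ∀ i ∈ Finset.univ, |t i| = 0 :=
        (Finset.sum_eq_zero_iff_of_nonneg (fun i _ => abs_nonneg _)).mp
          (hT.symm.trans hT0'.symm)
      have ht : ∀ i, t i = 0 := fun i => abs_eq_zero.mp (this i (Finset.mem_univ i))
      simp only [ht, zero_smul, Finset.sum_const_zero, norm_zero, sub_zero, abs_zero]
      exact mul_nonneg hR0 hT0
  haveI finA : Module.Finite ℝ A :=
    ⟨⟨Finset.univ.image a, by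
      rw [Finset.coe_image, Finset.coe_univ, Set.image_univ]; exact ha⟩⟩
  haveI finB : Module.Finite ℝ B :=
    ⟨⟨Finset.univ.image b, by
      rw [Finset.coe_image, Finset.coe_univ, Set.image_univ]; exact hb⟩⟩
  obtain ⟨C, iC1, iC2, iC3, f, g, hfg⟩ :=
    HensonAux.exists_embedding hR0 a b hr finA finB
  have hmem : (⨆ i, ‖f (a i) - g (b i)‖) ∈ S := ⟨C, iC1, iC2, iC3, f, g, rfl⟩
  have hvr : (⨆ i, ‖f (a i) - g (b i)‖) ≤ R := ciSup_le hfg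
  have hlow : ∀ x ∈ S, R ≤ x := by
    rintro x ⟨C', iC1', iC2', iC3', f', g', rfl⟩
    refine ciSup_le fun s => ?_
    have hMb : BddAbove (Set.range fun i => ‖f' (a i) - g' (b i)‖) :=
      (Set.finite_range _).bddAbove
    have hM : ∀ i, ‖f' (a i) - g' (b i)‖ ≤ ⨆ i, ‖f' (a i) - g' (b i)‖ :=
      fun i => le_ciSup hMb i
    have e1 : f' (∑ i, s.1 i • a i) = ∑ i, s.1 i • f' (a i) := by
      rw [map_sum]
      exact Finset.sum_congr rfl fun i _ => f'.map_smul _ _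
    have e2 : g' (∑ i, s.1 i • b i) = ∑ i, s.1 i • g' (b i) := by
      rw [map_sum]
      exact Finset.sum_congr rfl fun i _ => g'.map_smul _ _
    calc |‖∑ i, s.1 i • a i‖ - ‖∑ i, s.1 i • b i‖|
        = |‖f' (∑ i, s.1 i • a i)‖ - ‖g' (∑ i, s.1 i • b i)‖| := by
          rw [f'.norm_map, g'.norm_map]
      _ ≤ ‖f' (∑ i, s.1 i • a i) - g' (∑ i, s.1 i • b i)‖ := abs_norm_sub_norm_le _ _
      _ = ‖∑ i, s.1 i • (f' (a i) - g' (b i))‖ := by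
          rw [e1, e2, ← Finset.sum_sub_distrib]
          exact congrArg _ (Finset.sum_congr rfl fun i _ => (smul_sub _ _ _).symm)
      _ ≤ ∑ i, ‖s.1 i • (f' (a i) - g' (b i))‖ := norm_sum_le _ _
      _ ≤ ∑ i, |s.1 i| * (⨆ i, ‖f' (a i) - g' (b i)‖) := by
          refine Finset.sum_le_sum fun i _ => ?_
          rw [norm_smul, Real.norm_eq_abs]
          exact mul_le_mul_of_nonneg_left (hM i) (abs_nonneg _)
      _ = ⨆ i, ‖f' (a i) - g' (b i)‖ := by rw [← Finset.sum_mul, s.2, one_mul]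
  have hSbd : BddBelow S := ⟨R, fun x hx => hlow x hx⟩
  exact le_antisymm ((csInf_le hSbd hmem).trans hvr) (le_csInf ⟨_, hmem⟩ hlow)
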